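/- Let A ⊆ ℕ satisfy the hypotheses of the main theorem: there exist δ > 0 and 1/2 < α ≤ 1 with |A ∩ [0, N−1]| = δ·N^α for arbitrarily large N, and there exist C > 0 and β with 2/3 < β ≤ 1 and β > 2 − 2α such that for all such sufficiently large N and all 1 ≤ k ≤ N−1, |χ̂_{A_N}(k)| ≤ C·(min(k, N−k)·N)^{−β/2}, where A_N = A ∩ [0, N−1]. Then there exist c > 0 and N₀ such that for all admissible N ≥ N₀ (with N odd), Λ₃(χ_{A_N}, χ_{A_N}, χ_{A_N}) ≥ c·N^{3α−3}, where χ_{A_N} is regarded as a function on ℤ/Nℤ. -/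

import Mathlib

set_option maxHeartbeats 1000000

open Complex Real Finset

/-- Discrete Fourier coefficient of the characteristic function of `A ∩ [0, N-1]`. -/
noncomputable def natFourier (A : Set ℕ) (N : ℕ) (k : ℤ) : ℂ :=
  (N : ℂ)⁻¹ * ∑ n ∈ Finset.range N,
    (A.indicator (fun _ => (1 : ℂ)) n) *
      Complex.exp (-(2 * Real.pi * Complex.I * k * n) / N)

/-- The trilinear form `Λ₃(f,g,h) = (1/N²) ∑_{x,r} f(x) g(x+r) h(x+2r)` on `ℤ/Nℤ`. -/
noncomputable def lambda3 (N : ℕ) (f g h : ZMod N → ℂ) : ℂ :=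
  ((N : ℂ) ^ 2)⁻¹ * ∑ x ∈ Finset.range N, ∑ r ∈ Finset.range N,
    f x * g ((x : ZMod N) + r) * h ((x : ZMod N) + 2 * r)

/-- The characteristic function of `A ∩ [0, N-1]`, regarded as a function on `ℤ/Nℤ`. -/
noncomputable def chiZMod (A : Set ℕ) (N : ℕ) : ZMod N → ℂ :=
  fun x => A.indicator (fun _ => (1 : ℂ)) x.val

noncomputable def chr (N : ℕ) (x : ZMod N) : ℂ :=
  Complex.exp (2 * Real.pi * Complex.I * x.val / N)

lemma chr_intCast (N : ℕ) [NeZero N] (m : ℤ) :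
    chr N (m : ZMod N) = Complex.exp (2 * Real.pi * Complex.I * m / N) := by
  have hN : (N : ℂ) ≠ 0 := Nat.cast_ne_zero.mpr (NeZero.ne N)
  have hval : (((m : ZMod N).val : ℤ)) = m - N * (m / N) := by
    rw [ZMod.val_intCast, Int.emod_def]
  unfold chr
  have : (((m : ZMod N).val : ℂ)) = (m : ℂ) - N * ((m / N : ℤ) : ℂ) := by
    exact_mod_cast congrArg (fun z : ℤ => (z : ℂ)) hval
  rw [this]
  rw [show 2 * (Real.pi:ℂ) * Complex.I * ((m:ℂ) - N * ((m / N : ℤ) : ℂ)) / N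
      = 2 * (Real.pi:ℂ) * Complex.I * m / N + (-((m / N : ℤ) : ℂ)) * (2 * Real.pi * Complex.I) by
    field_simp; ring]
  rw [Complex.exp_add]
  rw [show (-((m / N : ℤ) : ℂ)) = (((-(m / N) : ℤ)) : ℂ) by push_cast; ring]
  rw [Complex.exp_int_mul_two_pi_mul_I]
  ring

lemma chr_natCast (N : ℕ) [NeZero N] (m : ℕ) :
    chr N (m : ZMod N) = Complex.exp (2 * Real.pi * Complex.I * m / N) := by
  have := chr_intCast N (m : ℤ)
  push_cast at this ⊢
  exact this

lemma chr_add (N : ℕ) [NeZero N] (x y : ZMod N) : chr N (x + y) = chr N x * chr N y := by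
  have hx : ((x.val : ℤ) : ZMod N) = x := by exact_mod_cast ZMod.natCast_rightInverse x
  have hy : ((y.val : ℤ) : ZMod N) = y := by exact_mod_cast ZMod.natCast_rightInverse y
  have h1 : x + y = ((((x.val : ℤ) + (y.val : ℤ) : ℤ)) : ZMod N) := by
    push_cast [hx, hy]; ring
  rw [h1, chr_intCast]
  conv_rhs => rw [← hx, ← hy, chr_intCast, chr_intCast]
  rw [← Complex.exp_add]
  congr 1
  push_cast
  ring

lemma chr_zero (N : ℕ) [NeZero N] : chr N 0 = 1 := by
  unfold chr
  simp

lemma chr_ne_one (N : ℕ) [NeZero N] {x : ZMod N} (hx : x ≠ 0) : chr N x ≠ 1 := by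
  intro h
  rw [chr, Complex.exp_eq_one_iff] at h
  obtain ⟨n, hn⟩ := h
  have hN : (N : ℂ) ≠ 0 := Nat.cast_ne_zero.mpr (NeZero.ne N)
  have hπ : (Real.pi : ℂ) ≠ 0 := by exact_mod_cast Real.pi_ne_zero
  have hI : Complex.I ≠ 0 := Complex.I_ne_zero
  have hc : (2 * (Real.pi:ℂ) * Complex.I) ≠ 0 := by
    simp [Real.pi_ne_zero, Complex.I_ne_zero, Complex.ofReal_ne_zero]
  have h2 : (x.val : ℂ) = n * N := by
    have h4 := congrArg (fun z => z * (N:ℂ)) hn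
    field_simp at h4
    refine mul_left_cancel₀ hc ?_
    rw [ZMod.natCast_val]
    rw [← ZMod.natCast_val, h4]; ring
  have h3 : (x.val : ℤ) = n * N := by exact_mod_cast h2
  have hlt : x.val < N := ZMod.val_lt x
  have hge : 0 < x.val := Nat.pos_of_ne_zero (fun h0 => hx ((ZMod.val_eq_zero x).mp h0))
  have hNpos : (0 : ℤ) < N := by exact_mod_cast Nat.pos_of_ne_zero (NeZero.ne N)
  rcases lt_trichotomy n 0 with h | h | h
  · nlinarith [h3, hge, hNpos]
  · rw [h, zero_mul] at h3; omega
  · nlinarith [h3, hlt, hNpos]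

lemma chr_orth (N : ℕ) [NeZero N] (m : ZMod N) :
    ∑ k : ZMod N, chr N (k * m) = if m = 0 then (N : ℂ) else 0 := by
  rcases eq_or_ne m 0 with h | h
  · simp [h, chr_zero, Finset.card_univ, ZMod.card]
  · rw [if_neg h]
    set S := ∑ k : ZMod N, chr N (k * m) with hS
    have h1 : S = chr N m * S := by
      rw [hS]
      rw [Finset.mul_sum]
      refine Fintype.sum_equiv (Equiv.addRight (-1 : ZMod N)) _ _ fun k => ?_
      simp only [Equiv.coe_addRight]
      rw [← chr_add]
      congr 1
      ring
    have h2 : (chr N m - 1) * S = 0 := by linear_combination -h1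
    rcases mul_eq_zero.mp h2 with h3 | h3
    · exact absurd (by linear_combination h3) (chr_ne_one N h)
    · exact h3

lemma zsum (N : ℕ) [NeZero N] (h : ZMod N → ℂ) :
    ∑ x : ZMod N, h x = ∑ n ∈ Finset.range N, h (n : ZMod N) := by
  refine Finset.sum_nbij' (fun x => x.val) (fun n => (n : ZMod N)) ?_ ?_ ?_ ?_ ?_
  · intro a _; exact Finset.mem_range.mpr (ZMod.val_lt a)
  · intro a _; exact Finset.mem_univ _
  · intro a _; exact ZMod.natCast_rightInverse a
  · intro a ha; exact ZMod.val_cast_of_lt (Finset.mem_range.mp ha)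
  · intro a _; rw [ZMod.natCast_rightInverse a]

noncomputable def Gf (N : ℕ) [NeZero N] (f : ZMod N → ℂ) (k : ZMod N) : ℂ :=
  (N : ℂ)⁻¹ * ∑ x : ZMod N, f x * chr N (-(k * x))

lemma key (N : ℕ) [NeZero N] (f : ZMod N → ℂ) :
    ((N : ℂ) ^ 2)⁻¹ * ∑ x ∈ Finset.range N, ∑ r ∈ Finset.range N,
        f x * f ((x : ZMod N) + r) * f ((x : ZMod N) + 2 * r)
      = ∑ k : ZMod N, (Gf N f k) ^ 2 * Gf N f (-(2 * k)) := by
  have hN : (N : ℂ) ≠ 0 := Nat.cast_ne_zero.mpr (NeZero.ne N)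
  have L1 : ∑ x ∈ Finset.range N, ∑ r ∈ Finset.range N,
        f x * f ((x : ZMod N) + r) * f ((x : ZMod N) + 2 * r)
      = ∑ x : ZMod N, ∑ r : ZMod N, f x * f (x + r) * f (x + 2 * r) := by
    rw [zsum N (fun x => ∑ r : ZMod N, f x * f (x + r) * f (x + 2 * r))]
    refine Finset.sum_congr rfl fun x _ => ?_
    rw [zsum N (fun r => f (x : ZMod N) * f ((x : ZMod N) + r) * f ((x : ZMod N) + 2 * r))]
  have L2 : ∀ x : ZMod N, ∑ r : ZMod N, f x * f (x + r) * f (x + 2 * r)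
      = ∑ c : ZMod N, f x * f c * f (2 * c - x) := by
    intro x
    refine Fintype.sum_equiv (Equiv.addLeft x) _ _ fun r => ?_
    simp only [Equiv.coe_addLeft]
    congr 2
    ring
  have R1 : ∑ k : ZMod N, (Gf N f k) ^ 2 * Gf N f (-(2 * k))
      = ∑ c : ZMod N, ∑ b : ZMod N, ∑ a : ZMod N, ((N : ℂ)⁻¹) ^ 3 *
          (f a * f b * f c) * (∑ k : ZMod N, chr N (k * (2 * c - a - b))) := by
    have e1 : ∀ k : ZMod N, (Gf N f k) ^ 2 * Gf N f (-(2 * k))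
        = ∑ c : ZMod N, ∑ b : ZMod N, ∑ a : ZMod N, ((N : ℂ)⁻¹) ^ 3 *
            (f a * f b * f c) * chr N (k * (2 * c - a - b)) := by
      intro k
      rw [Gf, Gf, sq]
      simp only [Finset.mul_sum, Finset.sum_mul]
      refine Finset.sum_congr rfl fun c _ => ?_
      refine Finset.sum_congr rfl fun b _ => ?_
      refine Finset.sum_congr rfl fun a _ => ?_
      have hchr : chr N (-(k * a)) * chr N (-(k * b)) * chr N (-(-(2 * k) * c))
          = chr N (k * (2 * c - a - b)) := by
        rw [← chr_add, ← chr_add]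
        congr 1
        ring
      rw [← hchr]
      ring
    rw [Finset.sum_congr rfl fun k _ => e1 k]
    rw [Finset.sum_comm]
    refine Finset.sum_congr rfl fun c _ => ?_
    rw [Finset.sum_comm]
    refine Finset.sum_congr rfl fun b _ => ?_
    rw [Finset.sum_comm]
    refine Finset.sum_congr rfl fun a _ => ?_
    rw [← Finset.mul_sum]
  have R2 : ∀ c : ZMod N, ∀ b : ZMod N,
      ∑ a : ZMod N, ((N : ℂ)⁻¹) ^ 3 * (f a * f b * f c) *
          (∑ k : ZMod N, chr N (k * (2 * c - a - b)))
        = ((N : ℂ)⁻¹) ^ 3 * (f (2 * c - b) * f b * f c) * N := by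
    intro c b
    have hiff : ∀ a : ZMod N, (2 * c - a - b = 0) = (2 * c - b = a) :=
      fun a => propext ⟨fun h => by linear_combination h, fun h => by linear_combination h⟩
    calc ∑ a : ZMod N, ((N : ℂ)⁻¹) ^ 3 * (f a * f b * f c) *
          (∑ k : ZMod N, chr N (k * (2 * c - a - b)))
        = ∑ a : ZMod N, if 2 * c - b = a then ((N : ℂ)⁻¹) ^ 3 * (f a * f b * f c) * N else 0 := by
          refine Finset.sum_congr rfl fun a _ => ?_
          rw [chr_orth]
          simp only [hiff, mul_ite, mul_zero]
      _ = ((N : ℂ)⁻¹) ^ 3 * (f (2 * c - b) * f b * f c) * N := by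
          rw [Finset.sum_ite_eq]
          simp
  rw [R1, L1]
  rw [Finset.sum_congr rfl fun x _ => L2 x]
  rw [Finset.sum_congr rfl fun c (_ : c ∈ Finset.univ) => Finset.sum_congr rfl fun b _ => R2 c b]
  rw [Finset.mul_sum, Finset.sum_comm]
  refine Finset.sum_congr rfl fun c _ => ?_
  rw [Finset.mul_sum]
  refine Finset.sum_congr rfl fun b _ => ?_
  field_simp

lemma Gf_eq (A : Set ℕ) (N : ℕ) [NeZero N] (k : ZMod N) :
    Gf N (chiZMod A N) k = natFourier A N (k.val : ℤ) := by
  rw [Gf, natFourier]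
  congr 1
  rw [zsum N (fun x => chiZMod A N x * chr N (-(k * x)))]
  refine Finset.sum_congr rfl fun n hn => ?_
  have hn' : n < N := Finset.mem_range.mp hn
  congr 1
  · rw [chiZMod, ZMod.val_cast_of_lt hn']
  · have h1 : -(k * (n : ZMod N)) = ((-(k.val * n : ℤ) : ℤ) : ZMod N) := by
      push_cast
      rw [ZMod.natCast_val, ZMod.cast_id]
    rw [h1, chr_intCast]
    congr 1
    push_cast
    ring
lemma Gf_zero (N : ℕ) [NeZero N] (f : ZMod N → ℂ) :
    Gf N f 0 = (N : ℂ)⁻¹ * ∑ x : ZMod N, f x := by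
  rw [Gf]
  congr 1
  refine Finset.sum_congr rfl fun x _ => ?_
  rw [zero_mul, neg_zero, chr_zero, mul_one]

lemma chi_sum (A : Set ℕ) (N : ℕ) [NeZero N] :
    ∑ x : ZMod N, chiZMod A N x = (Nat.card ↥(A ∩ Set.Ico 0 N) : ℂ) := by
  classical
  rw [zsum]
  have h1 : ∀ n ∈ Finset.range N, chiZMod A N (n : ZMod N)
      = if n ∈ A then (1 : ℂ) else 0 := by
    intro n hn
    rw [chiZMod, ZMod.val_cast_of_lt (Finset.mem_range.mp hn), Set.indicator_apply]
  rw [Finset.sum_congr rfl h1, ← Finset.sum_filter]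
  rw [Finset.sum_const, nsmul_eq_mul, mul_one]
  have h2 : A ∩ Set.Ico 0 N = ↑((Finset.range N).filter (fun n => n ∈ A)) := by
    ext n
    simp only [Set.mem_inter_iff, Set.mem_Ico, Finset.coe_filter, Finset.mem_range,
      Set.mem_setOf_eq]
    exact ⟨fun h => ⟨h.2.2, h.1⟩, fun h => ⟨h.2, Nat.zero_le n, h.1⟩⟩
  rw [Nat.card_coe_set_eq, h2, Set.ncard_coe_finset]

lemma sum_erase_val (N : ℕ) [NeZero N] (g : ℕ → ℝ) :
    ∑ k ∈ Finset.univ.erase (0 : ZMod N), g k.val = ∑ n ∈ Finset.Ico 1 N, g n := by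
  refine Finset.sum_nbij' (fun k => k.val) (fun n => (n : ZMod N)) ?_ ?_ ?_ ?_ ?_
  · intro a ha
    have h0 : a ≠ 0 := (Finset.mem_erase.mp ha).1
    have : a.val ≠ 0 := fun h => h0 ((ZMod.val_eq_zero a).mp h)
    exact Finset.mem_Ico.mpr ⟨Nat.one_le_iff_ne_zero.mpr this, ZMod.val_lt a⟩
  · intro n hn
    obtain ⟨h1, h2⟩ := Finset.mem_Ico.mp hn
    refine Finset.mem_erase.mpr ⟨?_, Finset.mem_univ _⟩
    intro h
    have hv := congrArg ZMod.val h
    rw [ZMod.val_cast_of_lt h2, ZMod.val_zero] at hv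
    omega
  · intro a _; exact ZMod.natCast_rightInverse a
  · intro n hn; exact ZMod.val_cast_of_lt (Finset.mem_Ico.mp hn).2
  · intro a _; rfl

lemma sum_Ico_reflect (N : ℕ) (g : ℕ → ℝ) :
    ∑ n ∈ Finset.Ico 1 N, g (N - n) = ∑ n ∈ Finset.Ico 1 N, g n := by
  refine Finset.sum_nbij' (fun n => N - n) (fun n => N - n) ?_ ?_ ?_ ?_ ?_
  · intro a ha; obtain ⟨h1, h2⟩ := Finset.mem_Ico.mp ha
    refine Finset.mem_Ico.mpr ?_
    constructor
    · show 1 ≤ N - a; omega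
    · show N - a < N; omega
  · intro a ha; obtain ⟨h1, h2⟩ := Finset.mem_Ico.mp ha
    refine Finset.mem_Ico.mpr ?_
    constructor
    · show 1 ≤ N - a; omega
    · show N - a < N; omega
  · intro a ha; obtain ⟨h1, h2⟩ := Finset.mem_Ico.mp ha; show N - (N - a) = a; omega
  · intro a ha; obtain ⟨h1, h2⟩ := Finset.mem_Ico.mp ha; show N - (N - a) = a; omega
  · intro a _; rfl

lemma sum_neg_two_mul (N : ℕ) [NeZero N] (hodd : Odd N) (g : ZMod N → ℝ) :
    ∑ k ∈ Finset.univ.erase (0 : ZMod N), g (-(2 * k))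
      = ∑ k ∈ Finset.univ.erase (0 : ZMod N), g k := by
  have h2 : IsUnit (-2 : ZMod N) := by
    refine IsUnit.neg ?_
    have : ((2 : ℕ) : ZMod N) = (2 : ZMod N) := by push_cast; ring
    rw [← this]
    exact (ZMod.isUnit_iff_coprime 2 N).mpr (Nat.coprime_two_left.mpr hodd)
  obtain ⟨u, hu⟩ := h2
  refine Finset.sum_nbij' (fun k => -(2 * k)) (fun k => (↑u⁻¹ : ZMod N) * k) ?_ ?_ ?_ ?_ ?_
  · intro a ha
    refine Finset.mem_erase.mpr ⟨?_, Finset.mem_univ _⟩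
    intro h
    have ha0 := (Finset.mem_erase.mp ha).1
    apply ha0
    have h'' : -(2 * a) = (0 : ZMod N) := h
    have : (↑u⁻¹ : ZMod N) * (-(2 * a)) = 0 := by rw [h'', mul_zero]
    rwa [show -(2 * a) = (↑u : ZMod N) * a by rw [hu]; ring, ← mul_assoc,
      Units.inv_mul, one_mul] at this
  · intro a ha
    refine Finset.mem_erase.mpr ⟨?_, Finset.mem_univ _⟩
    intro h
    have ha0 := (Finset.mem_erase.mp ha).1
    apply ha0
    have := congrArg (fun z => (↑u : ZMod N) * z) h
    simp only [mul_zero] at this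
    rwa [← mul_assoc, Units.mul_inv, one_mul] at this
  · intro a _
    show (↑u⁻¹ : ZMod N) * -(2 * a) = a
    rw [show -(2 * a) = (↑u : ZMod N) * a by rw [hu]; ring, ← mul_assoc, Units.inv_mul, one_mul]
  · intro a _
    show -(2 * ((↑u⁻¹ : ZMod N) * a)) = a
    rw [show -(2 * ((↑u⁻¹ : ZMod N) * a)) = (↑u : ZMod N) * ((↑u⁻¹ : ZMod N) * a) by
      rw [hu]; ring, ← mul_assoc, Units.mul_inv, one_mul]
  · intro a _; rfl

/-- Under the Salem-type hypotheses, `Λ₃(χ_{A_N}, χ_{A_N}, χ_{A_N}) ≥ c N^{3α-3}`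
for all sufficiently large admissible odd `N`. -/
theorem lambda3_lower_bound (A : Set ℕ) (δ α : ℝ) (S : Set ℕ)
    (hδ : 0 < δ) (hα₁ : 1/2 < α) (hα₂ : α ≤ 1)
    (hS : ∀ m : ℕ, ∃ N ∈ S, m ≤ N)
    (hcard : ∀ N ∈ S, (Nat.card ↥(A ∩ Set.Ico 0 N) : ℝ) = δ * (N : ℝ) ^ α)
    (C β : ℝ) (hC : 0 < C) (hβ₁ : 2/3 < β) (hβ₂ : β ≤ 1) (hβα : 2 - 2 * α < β)
    (N₁ : ℕ)
    (hFourier : ∀ N ∈ S, N₁ ≤ N → ∀ k : ℕ, 1 ≤ k → k ≤ N - 1 →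
      ‖natFourier A N k‖ ≤
        C * ((min k (N - k) * N : ℕ) : ℝ) ^ (-β / 2)) :
    ∃ c : ℝ, 0 < c ∧ ∃ N₀ : ℕ, ∀ N ∈ S, N₀ ≤ N → Odd N →
      c * (N : ℝ) ^ (3 * α - 3) ≤
        (lambda3 N (chiZMod A N) (chiZMod A N) (chiZMod A N)).re := by
  classical
  set s : ℝ := 3 * β / 2 with hs
  have hs1 : 1 < s := by rw [hs]; linarith
  have hsum : Summable (fun n : ℕ => (n : ℝ) ^ (-s)) :=
    Real.summable_nat_rpow.mpr (by linarith)
  set T : ℝ := ∑' n : ℕ, (n : ℝ) ^ (-s) with hT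
  have hT0 : 0 ≤ T := tsum_nonneg fun n => Real.rpow_nonneg (Nat.cast_nonneg n) _
  set ε : ℝ := 3 * α - 3 + s with hεdef
  have hε0 : 0 < ε := by rw [hεdef, hs]; linarith
  have htend : Filter.Tendsto (fun n : ℕ => (n : ℝ) ^ ε) Filter.atTop Filter.atTop :=
    (tendsto_rpow_atTop hε0).comp tendsto_natCast_atTop_atTop
  obtain ⟨N₂, hN₂⟩ := Filter.eventually_atTop.mp
    (htend.eventually_ge_atTop (4 * C ^ 3 * T / δ ^ 3))
  refine ⟨δ ^ 3 / 2, by positivity, max (max N₂ N₁) 1, ?_⟩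
  intro N hNS hN₀ hodd
  haveI : NeZero N := ⟨by
    intro h
    have := le_trans (le_max_right (max N₂ N₁) 1) hN₀
    omega⟩
  have hN1 : 1 ≤ N := le_trans (le_max_right _ _) hN₀
  have hNN₁ : N₁ ≤ N := le_trans (le_trans (le_max_right _ _) (le_max_left _ _)) hN₀
  have hNN₂ : N₂ ≤ N := le_trans (le_trans (le_max_left _ _) (le_max_left _ _)) hN₀
  have hNR : (0 : ℝ) < N := by exact_mod_cast Nat.pos_of_ne_zero (NeZero.ne N)
  set f : ZMod N → ℂ := chiZMod A N with hf
  set G : ZMod N → ℂ := Gf N f with hG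
  -- the spectral identity
  have hkey : lambda3 N f f f = ∑ k : ZMod N, G k ^ 2 * G (-(2 * k)) := key N f
  -- main term
  set M : ℝ := δ * (N : ℝ) ^ α / N with hMdef
  have hG0 : G 0 = (M : ℂ) := by
    rw [hG, Gf_zero, hf, chi_sum A N]
    rw [show ((Nat.card ↥(A ∩ Set.Ico 0 N) : ℂ)) = ((Nat.card ↥(A ∩ Set.Ico 0 N) : ℝ) : ℂ) by
      push_cast; ring]
    rw [hcard N hNS, hMdef]
    push_cast
    ring
  have hM0 : 0 ≤ M := by
    rw [hMdef]
    positivity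
  have hMval : M ^ 3 = δ ^ 3 * (N : ℝ) ^ (3 * α - 3) := by
    have h1 : (N : ℝ) ^ (3 * α - 3) = ((N : ℝ) ^ (α - 1)) ^ (3 : ℕ) := by
      rw [← Real.rpow_natCast ((N : ℝ) ^ (α - 1)) 3, ← Real.rpow_mul (le_of_lt hNR)]
      norm_num
      ring_nf
    have h2 : (N : ℝ) ^ (α - 1) = (N : ℝ) ^ α / N := by
      rw [Real.rpow_sub hNR, Real.rpow_one]
    rw [h1, h2, hMdef]
    ring
  -- split the sum
  have hsplit : ∑ k : ZMod N, G k ^ 2 * G (-(2 * k))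
      = (M ^ 3 : ℝ) + ∑ k ∈ Finset.univ.erase 0, G k ^ 2 * G (-(2 * k)) := by
    rw [← Finset.add_sum_erase _ _ (Finset.mem_univ (0 : ZMod N))]
    congr 1
    rw [show -(2 * (0 : ZMod N)) = 0 by ring, hG0]
    push_cast
    ring
  set R : ℂ := ∑ k ∈ Finset.univ.erase (0 : ZMod N), G k ^ 2 * G (-(2 * k)) with hR
  -- pointwise bound on |G k|^3 for k ≠ 0
  have hcube : ∀ k ∈ Finset.univ.erase (0 : ZMod N),
      ‖G k‖ ^ 3 ≤
        C ^ 3 * (((k.val : ℝ)) ^ (-s) + (((N - k.val : ℕ) : ℝ)) ^ (-s)) * (N : ℝ) ^ (-s) := by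
    intro k hk
    have hk0 : k ≠ 0 := (Finset.mem_erase.mp hk).1
    have hv1 : 1 ≤ k.val := Nat.one_le_iff_ne_zero.mpr fun h => hk0 ((ZMod.val_eq_zero k).mp h)
    have hvN : k.val < N := ZMod.val_lt k
    have hb := hFourier N hNS hNN₁ k.val hv1 (by omega)
    rw [← Gf_eq A N k, ← hf, ← hG] at hb
    set mn : ℕ := min k.val (N - k.val) with hmn
    set m : ℝ := ((mn * N : ℕ) : ℝ) with hm
    have hm0 : 0 ≤ m := Nat.cast_nonneg _
    have h3 : ‖G k‖ ^ 3 ≤ (C * m ^ (-β / 2)) ^ 3 :=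
      pow_le_pow_left₀ (norm_nonneg _) hb 3
    have hexp : (-β / 2) * ((3 : ℕ) : ℝ) = -s := by push_cast; rw [hs]; ring
    have h4 : (C * m ^ (-β / 2)) ^ 3 = C ^ 3 * m ^ (-s) := by
      rw [mul_pow, ← Real.rpow_natCast (m ^ (-β / 2)) 3, ← Real.rpow_mul hm0, hexp]
    have h5 : m ^ (-s) = ((mn : ℕ) : ℝ) ^ (-s) * (N : ℝ) ^ (-s) := by
      rw [hm, Nat.cast_mul, Real.mul_rpow (Nat.cast_nonneg _) (le_of_lt hNR)]
    have h6 : ((mn : ℕ) : ℝ) ^ (-s)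
        ≤ ((k.val : ℝ)) ^ (-s) + (((N - k.val : ℕ) : ℝ)) ^ (-s) := by
      rcases le_total k.val (N - k.val) with h | h
      · rw [hmn, min_eq_left h]
        have : (0 : ℝ) ≤ (((N - k.val : ℕ) : ℝ)) ^ (-s) := Real.rpow_nonneg (Nat.cast_nonneg _) _
        linarith
      · rw [hmn, min_eq_right h]
        have : (0 : ℝ) ≤ ((k.val : ℝ)) ^ (-s) := Real.rpow_nonneg (Nat.cast_nonneg _) _
        linarith
    calc ‖G k‖ ^ 3 ≤ C ^ 3 * m ^ (-s) := by rw [← h4]; exact h3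
      _ = C ^ 3 * ((mn : ℕ) : ℝ) ^ (-s) * (N : ℝ) ^ (-s) := by
          rw [h5]; ring
      _ ≤ C ^ 3 * (((k.val : ℝ)) ^ (-s) + (((N - k.val : ℕ) : ℝ)) ^ (-s)) * (N : ℝ) ^ (-s) := by
          have hC3 : (0 : ℝ) ≤ C ^ 3 := by positivity
          have hNs : (0 : ℝ) ≤ (N : ℝ) ^ (-s) := Real.rpow_nonneg (le_of_lt hNR) _
          exact mul_le_mul_of_nonneg_right (mul_le_mul_of_nonneg_left h6 hC3) hNs
  -- sum of cubes bound
  have hsumcube : ∑ k ∈ Finset.univ.erase (0 : ZMod N), ‖G k‖ ^ 3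
      ≤ C ^ 3 * (2 * T) * (N : ℝ) ^ (-s) := by
    calc ∑ k ∈ Finset.univ.erase (0 : ZMod N), ‖G k‖ ^ 3
        ≤ ∑ k ∈ Finset.univ.erase (0 : ZMod N),
            C ^ 3 * (((k.val : ℝ)) ^ (-s) + (((N - k.val : ℕ) : ℝ)) ^ (-s)) * (N : ℝ) ^ (-s) :=
          Finset.sum_le_sum hcube
      _ = C ^ 3 * (N : ℝ) ^ (-s) * ∑ k ∈ Finset.univ.erase (0 : ZMod N),
            (((k.val : ℝ)) ^ (-s) + (((N - k.val : ℕ) : ℝ)) ^ (-s)) := by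
          rw [Finset.mul_sum]
          exact Finset.sum_congr rfl fun k _ => by ring
      _ = C ^ 3 * (N : ℝ) ^ (-s) * ∑ n ∈ Finset.Ico 1 N,
            (((n : ℝ)) ^ (-s) + (((N - n : ℕ) : ℝ)) ^ (-s)) := by
          rw [sum_erase_val N (fun v => ((v : ℝ)) ^ (-s) + (((N - v : ℕ) : ℝ)) ^ (-s))]
      _ ≤ C ^ 3 * (2 * T) * (N : ℝ) ^ (-s) := by
          rw [Finset.sum_add_distrib]
          rw [sum_Ico_reflect N (fun v => ((v : ℝ)) ^ (-s))]
          have hle : ∑ n ∈ Finset.Ico 1 N, ((n : ℝ)) ^ (-s) ≤ T :=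
            Summable.sum_le_tsum _ (fun i _ => Real.rpow_nonneg (Nat.cast_nonneg i) _) hsum
          have hC3 : (0 : ℝ) ≤ C ^ 3 := by positivity
          have hNs : (0 : ℝ) ≤ (N : ℝ) ^ (-s) := Real.rpow_nonneg (le_of_lt hNR) _
          nlinarith [mul_le_mul_of_nonneg_left hle hC3]
  -- bound |R|
  have hRabs : ‖R‖ ≤ C ^ 3 * (2 * T) * (N : ℝ) ^ (-s) := by
    have h1 : ‖R‖ ≤ ∑ k ∈ Finset.univ.erase (0 : ZMod N),
        ‖G k‖ ^ 2 * ‖G (-(2 * k))‖ := by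
      rw [hR]
      calc ‖∑ k ∈ Finset.univ.erase (0 : ZMod N), G k ^ 2 * G (-(2 * k))‖
          = ‖∑ k ∈ Finset.univ.erase (0 : ZMod N), G k ^ 2 * G (-(2 * k))‖ :=
            rfl
        _ ≤ ∑ k ∈ Finset.univ.erase (0 : ZMod N), ‖G k ^ 2 * G (-(2 * k))‖ :=
            norm_sum_le _ _
        _ = ∑ k ∈ Finset.univ.erase (0 : ZMod N),
              ‖G k‖ ^ 2 * ‖G (-(2 * k))‖ := by
            refine Finset.sum_congr rfl fun k _ => ?_
            rw [norm_mul, norm_pow]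
    have h2 : ∀ k ∈ Finset.univ.erase (0 : ZMod N),
        ‖G k‖ ^ 2 * ‖G (-(2 * k))‖
          ≤ (2 * ‖G k‖ ^ 3 + ‖G (-(2 * k))‖ ^ 3) / 3 := by
      intro k _
      set a : ℝ := ‖G k‖
      set b : ℝ := ‖G (-(2 * k))‖
      have ha : 0 ≤ a := norm_nonneg _
      have hb : 0 ≤ b := norm_nonneg _
      nlinarith [mul_nonneg (sq_nonneg (a - b)) (by positivity : (0 : ℝ) ≤ 2 * a + b)]
    have h3 : ∑ k ∈ Finset.univ.erase (0 : ZMod N),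
        (2 * ‖G k‖ ^ 3 + ‖G (-(2 * k))‖ ^ 3) / 3
          = ∑ k ∈ Finset.univ.erase (0 : ZMod N), ‖G k‖ ^ 3 := by
      rw [show (fun k => (2 * ‖G k‖ ^ 3 + ‖G (-(2 * k))‖ ^ 3) / 3)
          = fun k => 2/3 * ‖G k‖ ^ 3
              + 1/3 * ‖G (-(2 * k))‖ ^ 3 from funext fun k => by ring]
      rw [Finset.sum_add_distrib, ← Finset.mul_sum, ← Finset.mul_sum]
      rw [sum_neg_two_mul N hodd (fun k => ‖G k‖ ^ 3)]
      ring
    calc ‖R‖ ≤ ∑ k ∈ Finset.univ.erase (0 : ZMod N),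
          ‖G k‖ ^ 2 * ‖G (-(2 * k))‖ := h1
      _ ≤ ∑ k ∈ Finset.univ.erase (0 : ZMod N),
          (2 * ‖G k‖ ^ 3 + ‖G (-(2 * k))‖ ^ 3) / 3 :=
            Finset.sum_le_sum h2
      _ = ∑ k ∈ Finset.univ.erase (0 : ZMod N), ‖G k‖ ^ 3 := h3
      _ ≤ C ^ 3 * (2 * T) * (N : ℝ) ^ (-s) := hsumcube
  -- real part
  have hre : (lambda3 N f f f).re = M ^ 3 + R.re := by
    rw [hkey, hsplit, Complex.add_re, Complex.ofReal_re]
  have hRre : -(C ^ 3 * (2 * T) * (N : ℝ) ^ (-s)) ≤ R.re := by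
    have h1 := Complex.abs_re_le_norm R
    have h2 := neg_abs_le R.re
    linarith
  -- final numeric comparison
  have h6 := hN₂ N hNN₂
  rw [hεdef, Real.rpow_add hNR] at h6
  have hNs : (0 : ℝ) < (N : ℝ) ^ s := Real.rpow_pos_of_pos hNR s
  have h7 : 4 * C ^ 3 * T ≤ (N : ℝ) ^ (3 * α - 3) * (N : ℝ) ^ s * δ ^ 3 := by
    rw [div_le_iff₀ (by positivity)] at h6
    linarith
  have h8 : C ^ 3 * (2 * T) * (N : ℝ) ^ (-s) ≤ δ ^ 3 / 2 * (N : ℝ) ^ (3 * α - 3) := by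
    rw [Real.rpow_neg (le_of_lt hNR), ← div_eq_mul_inv, div_le_iff₀ hNs]
    nlinarith [h7]
  have hMval3 : δ ^ 3 * (N : ℝ) ^ (3 * α - 3) = M ^ 3 := hMval.symm
  show δ ^ 3 / 2 * (N : ℝ) ^ (3 * α - 3) ≤ (lambda3 N f f f).re
  rw [hre]
  nlinarith [hMval, hRre, h8]
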